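/- Under the late-stage training assumption, there exist constants C > 0 and M > 0 such that for every k ≥ k₀, ‖w_{k+1}‖² ≥ ‖w_k‖²·(1 + C·γ·e^{−M·‖w_k‖^L}·‖w_k‖^{L−2}). -/

import Mathlib

open scoped RealInnerProductSpace

/-- Lower estimate on the growth of the squared norm of the iterates. -/
theorem stmt_7 {d n L : ℕ} (hd : 0 < d) (hn : 0 < n) (hL : 0 < L)
    (p : Fin n → EuclideanSpace ℝ (Fin d) → ℝ)
    (hplip : ∀ i, LocallyLipschitz (p i))
    (hphom : ∀ i, ∀ c : ℝ, 0 < c → ∀ w, p i (c • w) = c ^ L * p i w)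
    (a : Fin n → EuclideanSpace ℝ (Fin d) → EuclideanSpace ℝ (Fin d))
    (haw : ∀ i w, ⟪a i w, w⟫ = (L : ℝ) * p i w)
    (hahom : ∀ i, ∀ c : ℝ, 0 < c → ∀ w, a i (c • w) = c ^ (L - 1) • a i w)
    (habd : ∀ i, ∃ M : ℝ, ∀ u : EuclideanSpace ℝ (Fin d), ‖u‖ = 1 → ‖a i u‖ ≤ M)
    (l : ℝ → ℝ) (hl : Differentiable ℝ l)
    (hl' : ∀ q : ℝ, 0 ≤ q →
      (1 / 2) * Real.exp (-q) ≤ -deriv l q ∧ -deriv l q ≤ Real.exp (-q))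
    (γ : ℝ) (hγ : 0 < γ)
    (B : ℕ → Finset (Fin n)) (hB : ∀ k, (B k).Nonempty)
    (w : ℕ → EuclideanSpace ℝ (Fin d))
    (hw : ∀ k, w (k + 1) =
      w k - (γ / (B k).card) • ∑ i ∈ B k, deriv l (p i (w k)) • a i (w k))
    (ε : ℝ) (hε : 0 < ε) (k₀ : ℕ)
    (hlate : ∀ k ≥ k₀, w k ≠ 0 ∧ ε ≤ ⨅ i, p i ((‖w k‖)⁻¹ • w k)) :
    ∃ C : ℝ, 0 < C ∧ ∃ M : ℝ, 0 < M ∧ ∀ k ≥ k₀,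
      ‖w k‖ ^ 2 * (1 + C * γ * Real.exp (-M * ‖w k‖ ^ L) * ‖w k‖ ^ ((L : ℤ) - 2)) ≤
        ‖w (k + 1)‖ ^ 2 := by
  haveI : Nonempty (Fin n) := ⟨⟨0, hn⟩⟩
  -- bound p i on the unit sphere
  have hbnd : ∀ i : Fin n, ∃ Ci : ℝ, ∀ u : EuclideanSpace ℝ (Fin d), ‖u‖ = 1 → p i u ≤ Ci := by
    intro i
    obtain ⟨Ci, hCi⟩ :=
      (isCompact_sphere (0 : EuclideanSpace ℝ (Fin d)) 1).exists_bound_of_continuousOn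
        ((hplip i).continuous.continuousOn)
    refine ⟨Ci, fun u hu => (le_abs_self _).trans ?_⟩
    have := hCi u (by simpa [mem_sphere_zero_iff_norm] using hu)
    simpa [Real.norm_eq_abs] using this
  choose P hP using hbnd
  set M : ℝ := max 1 (Finset.univ.sup' Finset.univ_nonempty P) with hMdef
  have hM1 : (1 : ℝ) ≤ M := le_max_left _ _
  have hMpos : (0 : ℝ) < M := lt_of_lt_of_le one_pos hM1
  have hPM : ∀ i (u : EuclideanSpace ℝ (Fin d)), ‖u‖ = 1 → p i u ≤ M := fun i u hu =>
    (hP i u hu).trans ((Finset.le_sup' P (Finset.mem_univ i)).trans (le_max_right _ _))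
  have hLpos : (0 : ℝ) < (L : ℝ) := by exact_mod_cast hL
  refine ⟨(L : ℝ) * ε, mul_pos hLpos hε, M, hMpos, ?_⟩
  intro k hk
  obtain ⟨hwne, hεle⟩ := hlate k hk
  set R := ‖w k‖ with hR
  have hR0 : 0 < R := norm_pos_iff.mpr hwne
  set u := R⁻¹ • w k with hu
  have hunorm : ‖u‖ = 1 := by
    rw [hu, norm_smul, Real.norm_eq_abs, abs_of_pos (inv_pos.mpr hR0)]
    exact inv_mul_cancel₀ hR0.ne'
  have hwu : w k = R • u := (smul_inv_smul₀ hR0.ne' (w k)).symm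
  have hpw : ∀ i, p i (w k) = R ^ L * p i u := by
    intro i
    conv_lhs => rw [hwu]
    exact hphom i R hR0 u
  have hεu : ∀ i, ε ≤ p i u := fun i =>
    hεle.trans (ciInf_le (Set.finite_range _).bddBelow i)
  have hRL : 0 < R ^ L := pow_pos hR0 L
  have hq0 : ∀ i, ε * R ^ L ≤ p i (w k) := by
    intro i
    rw [hpw i]
    nlinarith [hεu i]
  have hqM : ∀ i, p i (w k) ≤ M * R ^ L := by
    intro i
    rw [hpw i]
    nlinarith [hPM i u hunorm]
  set E := Real.exp (-(M * R ^ L)) with hE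
  set K : ℝ := 1 / 2 * E * ((L : ℝ) * (ε * R ^ L)) with hK
  have hterm : ∀ i ∈ B k, deriv l (p i (w k)) * ((L : ℝ) * p i (w k)) ≤ -K := by
    intro i _
    have hq1 : ε * R ^ L ≤ p i (w k) := hq0 i
    have hq2 : p i (w k) ≤ M * R ^ L := hqM i
    have hqpos : 0 < p i (w k) := lt_of_lt_of_le (mul_pos hε hRL) hq1
    obtain ⟨h1, _⟩ := hl' (p i (w k)) hqpos.le
    have hd : deriv l (p i (w k)) ≤ -(1 / 2 * Real.exp (-(p i (w k)))) := by linarith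
    have hEq : E ≤ Real.exp (-(p i (w k))) := Real.exp_le_exp.mpr (by linarith)
    have step1 : deriv l (p i (w k)) * ((L : ℝ) * p i (w k)) ≤
        -(1 / 2 * Real.exp (-(p i (w k)))) * ((L : ℝ) * p i (w k)) :=
      mul_le_mul_of_nonneg_right hd (by positivity)
    have step2 : E * (ε * R ^ L) ≤ Real.exp (-(p i (w k))) * p i (w k) :=
      mul_le_mul hEq hq1 (by positivity) (Real.exp_pos _).le
    have step3 := mul_le_mul_of_nonneg_left step2 (show (0 : ℝ) ≤ (L : ℝ) / 2 by positivity)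
    rw [hK]
    nlinarith [step1, step3]
  have hcard : (0 : ℝ) < ((B k).card : ℝ) := by exact_mod_cast (hB k).card_pos
  have hinner : ⟪w k, (γ / ((B k).card : ℝ)) • ∑ i ∈ B k, deriv l (p i (w k)) • a i (w k)⟫ =
      (γ / ((B k).card : ℝ)) * ∑ i ∈ B k, deriv l (p i (w k)) * ((L : ℝ) * p i (w k)) := by
    rw [real_inner_smul_right]
    congr 1
    rw [inner_sum]
    refine Finset.sum_congr rfl fun i _ => ?_
    rw [real_inner_smul_right, real_inner_comm, haw]
  have hsum : ∑ i ∈ B k, deriv l (p i (w k)) * ((L : ℝ) * p i (w k)) ≤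
      ((B k).card : ℝ) * (-K) := by
    calc ∑ i ∈ B k, deriv l (p i (w k)) * ((L : ℝ) * p i (w k))
        ≤ ∑ _i ∈ B k, (-K) := Finset.sum_le_sum hterm
      _ = ((B k).card : ℝ) * (-K) := by rw [Finset.sum_const, nsmul_eq_mul]
  have hinle : ⟪w k, (γ / ((B k).card : ℝ)) • ∑ i ∈ B k, deriv l (p i (w k)) • a i (w k)⟫ ≤
      -(γ * K) := by
    rw [hinner]
    have h2 := mul_le_mul_of_nonneg_left hsum (le_of_lt (div_pos hγ hcard))
    have h3 : γ / ((B k).card : ℝ) * (((B k).card : ℝ) * (-K)) = -(γ * K) := by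
      rw [← mul_assoc, div_mul_cancel₀ γ hcard.ne']
      ring
    linarith [h2, h3.le, h3.ge]
  have hnorm : ‖w (k + 1)‖ ^ 2 =
      R ^ 2 - 2 * ⟪w k, (γ / ((B k).card : ℝ)) • ∑ i ∈ B k, deriv l (p i (w k)) • a i (w k)⟫ +
        ‖(γ / ((B k).card : ℝ)) • ∑ i ∈ B k, deriv l (p i (w k)) • a i (w k)‖ ^ 2 := by
    rw [hw k]
    exact norm_sub_sq_real _ _
  have hfin : R ^ 2 + 2 * γ * K ≤ ‖w (k + 1)‖ ^ 2 := by
    rw [hnorm]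
    have hnn : (0 : ℝ) ≤
        ‖(γ / ((B k).card : ℝ)) • ∑ i ∈ B k, deriv l (p i (w k)) • a i (w k)‖ ^ 2 :=
      sq_nonneg _
    linarith
  have hz : R ^ 2 * R ^ ((L : ℤ) - 2) = R ^ L := by
    rw [← zpow_natCast R 2, ← zpow_natCast R L, ← zpow_add₀ hR0.ne']
    congr 1
    push_cast
    ring
  have hgoal : -M * R ^ L = -(M * R ^ L) := by ring
  rw [hgoal]
  calc R ^ 2 * (1 + (L : ℝ) * ε * γ * E * R ^ ((L : ℤ) - 2))
      = R ^ 2 + (L : ℝ) * ε * γ * E * (R ^ 2 * R ^ ((L : ℤ) - 2)) := by ring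
    _ = R ^ 2 + (L : ℝ) * ε * γ * E * R ^ L := by rw [hz]
    _ = R ^ 2 + 2 * γ * K := by rw [hK]; ring
    _ ≤ ‖w (k + 1)‖ ^ 2 := hfin
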